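/- Let M be an abelian group and let a : UM → (UM)^{ab} denote the abelianization map. For every abelian group N and every quadratic map q : M → N there exists a unique group homomorphism f : (UM)^{ab} → N with f(a(s(m))) = q(m) for all m ∈ M; that is, the composite a ∘ s : M → (UM)^{ab} is the universal quadratic map out of M to an abelian group. -/

import Mathlib

open scoped TensorProduct

/-- The group `UM`: the kernel of `(T^{<3}M)^× → ℤ^× = {±1}`, where
`T^{<3}M = ℤ ⊕ M ⊕ (M ⊗_ℤ M)` is the tensor algebra of `M` over `ℤ` truncated in
degrees `< 3`.  An element `1 + m + t` (with `m : M`, `t : M ⊗[ℤ] M`) is encoded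
as the pair `⟨m, t⟩`, and the multiplication is
`(1+m+t)(1+m'+t') = 1 + (m+m') + (m ⊗ m' + t + t')`. -/
@[ext]
structure UGroup (M : Type) [AddCommGroup M] where
  m : M
  t : TensorProduct ℤ M M

namespace UGroup

variable {M : Type} [AddCommGroup M]

noncomputable instance : Mul (UGroup M) :=
  ⟨fun x y => ⟨x.m + y.m, x.m ⊗ₜ[ℤ] y.m + x.t + y.t⟩⟩
noncomputable instance : One (UGroup M) := ⟨⟨0, 0⟩⟩
noncomputable instance : Inv (UGroup M) :=
  ⟨fun x => ⟨-x.m, x.m ⊗ₜ[ℤ] x.m - x.t⟩⟩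

@[simp] lemma mul_m (x y : UGroup M) : (x * y).m = x.m + y.m := rfl
@[simp] lemma mul_t (x y : UGroup M) : (x * y).t = x.m ⊗ₜ[ℤ] y.m + x.t + y.t := rfl
@[simp] lemma one_m : (1 : UGroup M).m = 0 := rfl
@[simp] lemma one_t : (1 : UGroup M).t = 0 := rfl
@[simp] lemma inv_m (x : UGroup M) : (x⁻¹).m = -x.m := rfl
@[simp] lemma inv_t (x : UGroup M) : (x⁻¹).t = x.m ⊗ₜ[ℤ] x.m - x.t := rfl

noncomputable instance : Group (UGroup M) where
  mul_assoc x y z := by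
    ext
    · simp [add_assoc]
    · simp [TensorProduct.add_tmul, TensorProduct.tmul_add]
      abel
  one_mul x := by ext <;> simp
  mul_one x := by ext <;> simp
  inv_mul_cancel x := by
    ext
    · simp
    · simp [TensorProduct.neg_tmul]
      abel

/-- The set-theoretic section `s : M → UM`, `m ↦ 1 + m`. -/
noncomputable def s (m : M) : UGroup M := ⟨m, 0⟩

end UGroup

/-- A quadratic map `q : M → N` of abelian groups: a function such that
`(m, m') ↦ q(m+m') − q(m) − q(m')` is ℤ-bilinear (i.e. bi-additive). -/
def IsQuadraticMap {M N : Type} [AddCommGroup M] [AddCommGroup N] (q : M → N) : Prop :=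
  (∀ m₁ m₂ m' : M,
      q (m₁ + m₂ + m') - q (m₁ + m₂) - q m' =
        (q (m₁ + m') - q m₁ - q m') + (q (m₂ + m') - q m₂ - q m')) ∧
  (∀ m m₁' m₂' : M,
      q (m + (m₁' + m₂')) - q m - q (m₁' + m₂') =
        (q (m + m₁') - q m - q m₁') + (q (m + m₂') - q m - q m₂'))

/-- (Corollary 2.3, first part.)  The map `M → (UM)^{ab}` given by composing
`s : M → UM` with the abelianization map is universal for quadratic maps from `M`
to an abelian group: every quadratic map `q : M → N` factors through it via a
unique group homomorphism `f : (UM)^{ab} → N`. -/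
theorem self_cup_stmt_2 (M : Type) [AddCommGroup M] (N : Type) [AddCommGroup N]
    (q : M → N) (hq : IsQuadraticMap q) :
    ∃! f : Abelianization (UGroup M) →* Multiplicative N,
      ∀ m : M, f (Abelianization.of (UGroup.s m)) = Multiplicative.ofAdd (q m) := by

  obtain ⟨h1, h2⟩ := hq
  -- the bilinear map associated to q, as a linear map out of the tensor product
  set b1 : M →+ (M →ₗ[ℤ] N) := AddMonoidHom.mk'
      (fun m => (AddMonoidHom.mk' (fun m' => q (m + m') - q m - q m') (h2 m)).toIntLinearMap)
      (fun m₁ m₂ => by ext m'; exact h1 m₁ m₂ m') with hb1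
  set B : TensorProduct ℤ M M →ₗ[ℤ] N := TensorProduct.lift b1.toIntLinearMap with hBdef
  have hB : ∀ m m' : M, B (m ⊗ₜ[ℤ] m') = q (m + m') - q m - q m' := fun m m' => rfl
  have hq0 : q 0 = 0 := by
    have h := hB 0 0
    rw [TensorProduct.zero_tmul, map_zero] at h
    simp only [add_zero, sub_sub_cancel_left, eq_comm, neg_eq_zero] at h
    exact h
  set F : UGroup M →* Multiplicative N := MonoidHom.mk'
      (fun x => Multiplicative.ofAdd (q x.m - B x.t))
      (fun x y => by
        show Multiplicative.ofAdd _ = Multiplicative.ofAdd _ * Multiplicative.ofAdd _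
        rw [← ofAdd_add]
        congr 1
        simp only [UGroup.mul_m, UGroup.mul_t, map_add, hB]
        abel) with hF
  have hFs : ∀ m : M, F (UGroup.s m) = Multiplicative.ofAdd (q m) := by
    intro m
    show Multiplicative.ofAdd (q m - B 0) = _
    rw [map_zero, sub_zero]
  refine ⟨Abelianization.lift F, fun m => by simp [hFs m], ?_⟩
  intro g hg
  have hgs : ∀ m : M, g (Abelianization.of (UGroup.s m)) =
      (Abelianization.lift F) (Abelianization.of (UGroup.s m)) := by
    intro m; rw [hg m, Abelianization.lift_apply_of, hFs m]
  apply Abelianization.hom_ext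
  ext x
  show g (Abelianization.of x) = (Abelianization.lift F) (Abelianization.of x)
  have key : ∀ t : TensorProduct ℤ M M,
      g (Abelianization.of ⟨0, t⟩) = (Abelianization.lift F) (Abelianization.of ⟨0, t⟩) := by
    intro t
    induction t using TensorProduct.induction_on with
    | zero =>
        have h1' : (⟨0, 0⟩ : UGroup M) = 1 := rfl
        rw [h1']; simp
    | tmul m m' =>
        have hx : (⟨0, m ⊗ₜ[ℤ] m'⟩ : UGroup M) =
            UGroup.s m * UGroup.s m' * (UGroup.s (m + m'))⁻¹ := by
          ext
          · simp only [UGroup.mul_m, UGroup.inv_m, UGroup.s]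
            abel
          · simp [UGroup.s, TensorProduct.tmul_neg, TensorProduct.tmul_add,
              TensorProduct.add_tmul]
            abel
        rw [hx]
        simp only [map_mul, map_inv, hgs m, hgs m', hgs (m + m')]
    | add t t' iht iht' =>
        have hx : (⟨0, t + t'⟩ : UGroup M) = (⟨0, t⟩ : UGroup M) * ⟨0, t'⟩ := by
          ext <;> simp
        rw [hx]
        simp only [map_mul, iht, iht']
  have hx : x = UGroup.s x.m * ⟨0, x.t⟩ := by
    ext <;> simp [UGroup.s]
  rw [hx]
  simp only [map_mul, hgs x.m, key x.t]
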